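/- In algorithm AlgAU, if the graph G (with diameter at most D) is good at time t, then for every i ≥ 0, each node experiences at least i type AA transitions (clock increments) during the time interval [t, ϱ^{D+i}(t)), where ϱ is the round operator of the asynchronous schedule. -/

import Mathlib

set_option autoImplicit false

/-- A turn of AlgAU: able turns `Able(ℓ)` for `1 ≤ |ℓ| ≤ k` and faulty turns
`Faulty(ℓ)` for `2 ≤ |ℓ| ≤ k`. -/
inductive Turn where
  | able (ℓ : ℤ)
  | faulty (ℓ : ℤ)
deriving DecidableEq

/-- The level of a turn. -/
def Turn.level : Turn → ℤ
  | .able ℓ => ℓ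
  | .faulty ℓ => ℓ

/-- Whether a turn is able. -/
def Turn.isAble : Turn → Prop
  | .able _ => True
  | .faulty _ => False

/-- A turn belongs to the state set of AlgAU with parameter `k`. -/
def ValidTurn (k : ℤ) : Turn → Prop
  | .able ℓ => 1 ≤ |ℓ| ∧ |ℓ| ≤ k
  | .faulty ℓ => 2 ≤ |ℓ| ∧ |ℓ| ≤ k

/-- The forward operator: `φ(-1) = 1`, `φ(k) = -k`, `φ(ℓ) = ℓ + 1` otherwise. -/
def forwardOp (k : ℤ) (ℓ : ℤ) : ℤ :=
  if ℓ = -1 then 1 else if ℓ = k then -k else ℓ + 1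

/-- Levels `ℓ, ℓ'` are adjacent: `ℓ' ∈ {ℓ, φ(ℓ), φ⁻¹(ℓ)}`. -/
def adjLvl (k : ℤ) (ℓ ℓ' : ℤ) : Prop :=
  ℓ' = ℓ ∨ ℓ' = forwardOp k ℓ ∨ ℓ = forwardOp k ℓ'

/-- `ψ⁻¹(ℓ)`: the level one unit inwards of `ℓ` (same sign, absolute value decreased). -/
def inwd (ℓ : ℤ) : ℤ := if 0 < ℓ then ℓ - 1 else ℓ + 1

/-- `m` is strictly outwards of `ℓ`: same sign and strictly larger absolute value. -/
def strictOut (ℓ m : ℤ) : Prop := (0 < ℓ ∧ ℓ < m) ∨ (ℓ < 0 ∧ m < ℓ)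

/-- The inclusive neighborhood `N⁺(v)`. -/
def closedNbhd {V : Type} (G : SimpleGraph V) (v : V) : Set V := {u | u = v ∨ G.Adj u v}

/-- Node `v` is protected under configuration `c`: all incident edges have adjacent
endpoint levels. -/
def NodeProt {V : Type} (k : ℤ) (G : SimpleGraph V) (c : V → Turn) (v : V) : Prop :=
  ∀ u, G.Adj u v → adjLvl k ((c v).level) ((c u).level)

/-- Node `v` is good: protected and sensing no faulty turn. -/
def NodeGood {V : Type} (k : ℤ) (G : SimpleGraph V) (c : V → Turn) (v : V) : Prop :=
  NodeProt k G c v ∧ ∀ u ∈ closedNbhd G v, (c u).isAble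

/-- Condition for a type AA transition of `v` from `Able(ℓ)` to `Able(φ(ℓ))`:
`v` is good and all sensed levels belong to `{ℓ, φ(ℓ)}`. -/
def AAcond {V : Type} (k : ℤ) (G : SimpleGraph V) (c : V → Turn) (v : V) (ℓ : ℤ) : Prop :=
  c v = .able ℓ ∧ NodeGood k G c v ∧
    ∀ u ∈ closedNbhd G v, (c u).level = ℓ ∨ (c u).level = forwardOp k ℓ

/-- Condition for a type AF transition of `v` from `Able(ℓ)` to `Faulty(ℓ)`
(`2 ≤ |ℓ|`): `v` is not protected or senses the turn `Faulty(ψ⁻¹(ℓ))`. -/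
def AFcond {V : Type} (k : ℤ) (G : SimpleGraph V) (c : V → Turn) (v : V) (ℓ : ℤ) : Prop :=
  c v = .able ℓ ∧ 2 ≤ |ℓ| ∧
    (¬ NodeProt k G c v ∨ ∃ u ∈ closedNbhd G v, c u = .faulty (inwd ℓ))

/-- Condition for a type FA transition of `v` from `Faulty(ℓ)` to `Able(ψ⁻¹(ℓ))`:
`v` senses no level strictly outwards of `ℓ`. -/
def FAcond {V : Type} (G : SimpleGraph V) (c : V → Turn) (v : V) (ℓ : ℤ) : Prop :=
  c v = .faulty ℓ ∧ ∀ u ∈ closedNbhd G v, ¬ strictOut ℓ ((c u).level)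

/-- The new turn `q` of an activated node `v` in one step of AlgAU. -/
def StepNode {V : Type} (k : ℤ) (G : SimpleGraph V) (c : V → Turn) (v : V) (q : Turn) : Prop :=
  (∀ ℓ, AAcond k G c v ℓ → q = .able (forwardOp k ℓ)) ∧
  (∀ ℓ, AFcond k G c v ℓ → ¬ AAcond k G c v ℓ → q = .faulty ℓ) ∧
  (∀ ℓ, FAcond G c v ℓ → q = .able (inwd ℓ)) ∧
  ((∀ ℓ, ¬ AAcond k G c v ℓ ∧ ¬ AFcond k G c v ℓ ∧ ¬ FAcond G c v ℓ) → q = c v)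

/-- One asynchronous step of AlgAU with activation set `A`: activated nodes follow
the transition rules, the others keep their turns. -/
def Step {V : Type} (k : ℤ) (G : SimpleGraph V) (A : Set V) (c c' : V → Turn) : Prop :=
  ∀ v, (v ∉ A → c' v = c v) ∧ (v ∈ A → StepNode k G c v (c' v))

-- === auxiliary machinery (to be appended after given defs) ===
section AuxLemmas

def vld (k ℓ : ℤ) : Prop := (1 ≤ ℓ ∧ ℓ ≤ k) ∨ (-k ≤ ℓ ∧ ℓ ≤ -1)

lemma vld_of_abs {k ℓ : ℤ} (h1 : 1 ≤ |ℓ|) (h2 : |ℓ| ≤ k) : vld k ℓ := by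
  rcases abs_cases ℓ with ⟨h, _⟩ | ⟨h, _⟩ <;> unfold vld <;> omega

def idx (k ℓ : ℤ) : ℤ := if 0 < ℓ then ℓ + k - 1 else ℓ + k

lemma idx_range {k ℓ : ℤ} (h : vld k ℓ) : 0 ≤ idx k ℓ ∧ idx k ℓ < 2 * k := by
  unfold vld at h; unfold idx; split_ifs <;> omega

lemma vld_forward {k ℓ : ℤ} (hk : 2 ≤ k) (h : vld k ℓ) : vld k (forwardOp k ℓ) := by
  unfold vld at *; unfold forwardOp; split_ifs <;> omega

lemma idx_forward {k ℓ : ℤ} (hk : 2 ≤ k) (h : vld k ℓ) :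
    idx k (forwardOp k ℓ) = idx k ℓ + 1 ∨ idx k (forwardOp k ℓ) = idx k ℓ + 1 - 2 * k := by
  unfold vld at h; unfold idx forwardOp; split_ifs <;> omega

lemma forward_ne {k ℓ : ℤ} (hk : 2 ≤ k) : forwardOp k ℓ ≠ ℓ := by
  unfold forwardOp; split_ifs <;> omega

lemma forward2_ne {k ℓ : ℤ} (hk : 2 ≤ k) : forwardOp k (forwardOp k ℓ) ≠ ℓ := by
  unfold forwardOp; split_ifs <;> omega

lemma vld_iter {k ℓ : ℤ} (hk : 2 ≤ k) (h : vld k ℓ) (n : ℕ) : vld k ((forwardOp k)^[n] ℓ) := by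
  induction n with
  | zero => simpa
  | succ n ih => rw [Function.iterate_succ_apply']; exact vld_forward hk ih

lemma dvd_small {k a : ℤ} (hk : 0 < k) (h : (2 * k) ∣ a) (h2 : |a| < 2 * k) : a = 0 := by
  obtain ⟨c, hc⟩ := h
  rcases abs_cases a with ⟨ha, _⟩ | ⟨ha, _⟩ <;>
  · subst hc
    rcases lt_trichotomy c 0 with h | h | h
    · nlinarith
    · simp [h]
    · nlinarith

lemma idx_iter {k ℓ : ℤ} (hk : 2 ≤ k) (h : vld k ℓ) (n : ℕ) :
    (2 * k) ∣ (idx k ((forwardOp k)^[n] ℓ) - idx k ℓ - n) := by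
  induction n with
  | zero => simp
  | succ n ih =>
    rw [Function.iterate_succ_apply']
    obtain ⟨c, hc⟩ := ih
    rcases idx_forward hk (vld_iter hk h n) with he | he
    · rw [he]; push_cast; exact ⟨c, by linarith⟩
    · rw [he]; push_cast; exact ⟨c - 1, by linarith⟩

lemma eq_of_idx_mod {k ℓ m : ℤ} (hk : 2 ≤ k) (hl : vld k ℓ) (hm : vld k m)
    (h : (2 * k) ∣ (idx k ℓ - idx k m)) : ℓ = m := by
  have h1 := idx_range hl
  have h2 := idx_range hm
  have h0 : idx k ℓ - idx k m = 0 := dvd_small (by omega) h (by rw [abs_sub_lt_iff]; omega)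
  have : idx k ℓ = idx k m := by omega
  unfold vld at hl hm; unfold idx at this; split_ifs at this <;> omega

section Walks
variable {V : Type} (k : ℤ) (G : SimpleGraph V) (c : V → Turn)

lemma adj_step (hk : 2 ≤ k) (hval : ∀ v, vld k ((c v).level))
    (hprot : ∀ v, NodeProt k G c v) {u w : V} (h : G.Adj u w) :
    ∃ e : ℤ, |e| ≤ 1 ∧ (2 * k) ∣ (idx k ((c w).level) - idx k ((c u).level) - e) := by
  rcases hprot w u h with h0 | h1 | h2
  · exact ⟨0, by simp, by rw [h0]; simp⟩
  · refine ⟨-1, by simp, ?_⟩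
    rw [h1]
    rcases idx_forward hk (hval w) with he | he <;> rw [he]
    · exact ⟨0, by ring⟩
    · exact ⟨1, by ring⟩
  · refine ⟨1, by simp, ?_⟩
    rw [h2]
    rcases idx_forward hk (hval u) with he | he <;> rw [he]
    · exact ⟨0, by ring⟩
    · exact ⟨-1, by ring⟩

lemma walk_delta (hk : 2 ≤ k) (hval : ∀ v, vld k ((c v).level))
    (hprot : ∀ v, NodeProt k G c v) {u v : V} (p : G.Walk u v) :
    ∃ δ : ℤ, |δ| ≤ p.length ∧
      (2 * k) ∣ (idx k ((c v).level) - idx k ((c u).level) - δ) := by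
  induction p with
  | nil => exact ⟨0, by simp, by simp⟩
  | cons h p ih =>
    obtain ⟨δ, hδ1, hδ2⟩ := ih
    obtain ⟨e, he1, he2⟩ := adj_step k G c hk hval hprot h
    refine ⟨e + δ, ?_, ?_⟩
    · rw [SimpleGraph.Walk.length_cons]
      push_cast
      calc |e + δ| ≤ |e| + |δ| := abs_add_le _ _
        _ ≤ _ := by omega
    · obtain ⟨a, ha⟩ := hδ2; obtain ⟨b, hb⟩ := he2
      exact ⟨a + b, by linarith⟩

end Walks

def AAevt {V : Type} (k : ℤ) (σ : ℕ → V → Turn) (v : V) (s : ℕ) : Prop :=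
  ∃ ℓ, σ s v = .able ℓ ∧ σ (s + 1) v = .able (forwardOp k ℓ)

open Classical in
noncomputable def cnt {V : Type} (k : ℤ) (σ : ℕ → V → Turn) (t : ℕ) (v : V) (s : ℕ) : ℕ :=
  ((Finset.range s).filter (fun s' => t ≤ s' ∧ AAevt k σ v s')).card

lemma cnt_t {V : Type} (k : ℤ) (σ : ℕ → V → Turn) (t : ℕ) (v : V) :
    cnt k σ t v t = 0 := by
  classical
  rw [cnt, Finset.card_eq_zero, Finset.filter_eq_empty_iff]
  intro s hs
  rw [Finset.mem_range] at hs
  exact fun hcon => absurd hcon.1 (by omega)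

lemma cnt_succ_of {V : Type} {k : ℤ} {σ : ℕ → V → Turn} {t : ℕ} {v : V} {s : ℕ}
    (h : t ≤ s) (he : AAevt k σ v s) : cnt k σ t v (s + 1) = cnt k σ t v s + 1 := by
  classical
  rw [cnt, cnt, Finset.range_add_one, Finset.filter_insert, if_pos ⟨h, he⟩,
    Finset.card_insert_of_notMem (by simp)]

lemma cnt_succ_not {V : Type} {k : ℤ} {σ : ℕ → V → Turn} {t : ℕ} {v : V} {s : ℕ}
    (he : ¬ AAevt k σ v s) : cnt k σ t v (s + 1) = cnt k σ t v s := by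
  classical
  rw [cnt, cnt, Finset.range_add_one, Finset.filter_insert, if_neg (fun h => he h.2)]

lemma cnt_mono {V : Type} (k : ℤ) (σ : ℕ → V → Turn) (t : ℕ) (v : V) {s s' : ℕ}
    (h : s ≤ s') : cnt k σ t v s ≤ cnt k σ t v s' := by
  classical
  exact Finset.card_le_card (Finset.filter_subset_filter _ (Finset.range_subset_range.2 h))

lemma cnt_eq_ncard {V : Type} (k : ℤ) (σ : ℕ → V → Turn) (t : ℕ) (v : V) (T : ℕ) :
    Set.ncard {s : ℕ | t ≤ s ∧ s < T ∧
      ∃ ℓ, σ s v = .able ℓ ∧ σ (s + 1) v = .able (forwardOp k ℓ)} = cnt k σ t v T := by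
  classical
  rw [cnt, ← Set.ncard_coe_finset]
  congr 1
  ext s
  simp only [Finset.coe_filter, Finset.mem_coe, Finset.mem_filter, Finset.mem_range, Set.mem_setOf_eq, AAevt]
  constructor
  · rintro ⟨a, b, c⟩; exact Finset.mem_filter.2 ⟨Finset.mem_range.2 b, a, c⟩
  · intro h; obtain ⟨hb, a, c⟩ := Finset.mem_filter.1 h; exact ⟨a, Finset.mem_range.1 hb, c⟩

noncomputable def Lv {V : Type} (k : ℤ) (σ : ℕ → V → Turn) (t : ℕ) (H₀ : V → ℕ) (v : V) (s : ℕ) : ℕ :=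
  H₀ v + cnt k σ t v s

def InvAU {V : Type} (k : ℤ) (G : SimpleGraph V) (σ : ℕ → V → Turn) (t : ℕ)
    (H₀ : V → ℕ) (ℓ0 : ℤ) (s : ℕ) : Prop :=
  (∀ v, σ s v = Turn.able ((forwardOp k)^[Lv k σ t H₀ v s] ℓ0)) ∧
  ∀ u v : V, G.Adj u v → Lv k σ t H₀ u s ≤ Lv k σ t H₀ v s + 1

lemma inv_step {V : Type} {k : ℤ} {G : SimpleGraph V} {σ : ℕ → V → Turn} {t : ℕ}
    {H₀ : V → ℕ} {ℓ0 : ℤ} {As : Set V} {s : ℕ} (hk : 2 ≤ k)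
    (hstep : Step k G As (σ s) (σ (s + 1))) (hts : t ≤ s)
    (hI : InvAU k G σ t H₀ ℓ0 s) :
    InvAU k G σ t H₀ ℓ0 (s + 1) ∧
      ∀ v ∈ As, (∀ u, G.Adj u v → Lv k σ t H₀ v s ≤ Lv k σ t H₀ u s) →
        cnt k σ t v (s + 1) = cnt k σ t v s + 1 := by
  obtain ⟨hlvl, hlip⟩ := hI
  have hΦs : ∀ n : ℕ, (forwardOp k)^[n + 1] ℓ0 = forwardOp k ((forwardOp k)^[n] ℓ0) :=
    fun n => Function.iterate_succ_apply' (forwardOp k) n ℓ0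
  have hprot : ∀ v, NodeProt k G (σ s) v := by
    intro v u hadj
    have h1 := hlip u v hadj
    have h2 := hlip v u hadj.symm
    have hlv : (σ s v).level = (forwardOp k)^[Lv k σ t H₀ v s] ℓ0 := by rw [hlvl v]; rfl
    have hlu : (σ s u).level = (forwardOp k)^[Lv k σ t H₀ u s] ℓ0 := by rw [hlvl u]; rfl
    rw [hlv, hlu]
    have h3 : Lv k σ t H₀ u s = Lv k σ t H₀ v s ∨ Lv k σ t H₀ u s = Lv k σ t H₀ v s + 1
        ∨ Lv k σ t H₀ v s = Lv k σ t H₀ u s + 1 := by omega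
    rcases h3 with h3 | h3 | h3
    · rw [h3]; exact Or.inl rfl
    · rw [h3, hΦs]; exact Or.inr (Or.inl rfl)
    · rw [h3, hΦs]; exact Or.inr (Or.inr rfl)
  have hgoodv : ∀ v, NodeGood k G (σ s) v := by
    intro v
    refine ⟨hprot v, fun u _ => ?_⟩
    rw [hlvl u]; trivial
  have hfire : ∀ v ∈ As, (∀ u, G.Adj u v → Lv k σ t H₀ v s ≤ Lv k σ t H₀ u s) →
      σ (s + 1) v = .able (forwardOp k ((forwardOp k)^[Lv k σ t H₀ v s] ℓ0)) := by
    intro v hv hminp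
    have hAA : AAcond k G (σ s) v ((forwardOp k)^[Lv k σ t H₀ v s] ℓ0) := by
      refine ⟨hlvl v, hgoodv v, fun u hu => ?_⟩
      simp only [closedNbhd, Set.mem_setOf_eq] at hu
      rcases hu with rfl | hadj
      · left; rw [hlvl u]; rfl
      · have h1 := hlip u v hadj
        have h2 := hminp u hadj
        have hlu : (σ s u).level = (forwardOp k)^[Lv k σ t H₀ u s] ℓ0 := by rw [hlvl u]; rfl
        have h3 : Lv k σ t H₀ u s = Lv k σ t H₀ v s ∨
            Lv k σ t H₀ u s = Lv k σ t H₀ v s + 1 := by omega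
        rcases h3 with h3 | h3
        · left; rw [hlu, h3]
        · right; rw [hlu, h3, hΦs]
    exact ((hstep v).2 hv).1 _ hAA
  have hstay : ∀ v ∈ As, (∃ u, G.Adj u v ∧ Lv k σ t H₀ u s + 1 = Lv k σ t H₀ v s) →
      σ (s + 1) v = σ s v := by
    rintro v hv ⟨u₀, hadj, hL⟩
    refine ((hstep v).2 hv).2.2.2 (fun ℓ => ⟨?_, ?_, ?_⟩)
    · rintro ⟨hc, -, hall⟩
      rw [hlvl v] at hc
      injection hc with hc
      subst hc
      have hu := hall u₀ (Or.inr hadj)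
      have hlu : (σ s u₀).level = (forwardOp k)^[Lv k σ t H₀ u₀ s] ℓ0 := by rw [hlvl u₀]; rfl
      rw [hlu, ← hL, hΦs] at hu
      rcases hu with h | h
      · exact forward_ne hk h.symm
      · exact forward2_ne hk h.symm
    · rintro ⟨-, -, hbad⟩
      rcases hbad with hnp | ⟨u, -, hf⟩
      · exact hnp (hprot v)
      · rw [hlvl u] at hf; exact Turn.noConfusion hf
    · rintro ⟨hf, -⟩
      rw [hlvl v] at hf; exact Turn.noConfusion hf
  have hdichot : ∀ v, (σ (s + 1) v = σ s v ∧ cnt k σ t v (s + 1) = cnt k σ t v s) ∨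
      (cnt k σ t v (s + 1) = cnt k σ t v s + 1 ∧
       σ (s + 1) v = Turn.able ((forwardOp k)^[Lv k σ t H₀ v s + 1] ℓ0) ∧
       ∀ u, G.Adj u v → Lv k σ t H₀ v s ≤ Lv k σ t H₀ u s) := by
    intro v
    have hne : σ (s + 1) v = σ s v → ¬ AAevt k σ v s := by
      rintro h ⟨ℓ, h1, h2⟩
      rw [h, h1] at h2
      injection h2 with h2
      exact forward_ne hk h2.symm
    by_cases hv : v ∈ As
    · by_cases hminp : ∀ u, G.Adj u v → Lv k σ t H₀ v s ≤ Lv k σ t H₀ u s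
      · have hf := hfire v hv hminp
        refine Or.inr ⟨cnt_succ_of hts ⟨_, hlvl v, hf⟩, ?_, hminp⟩
        rw [hf, hΦs]
      · push_neg at hminp
        obtain ⟨u₀, hadj, hlt⟩ := hminp
        have hL : Lv k σ t H₀ u₀ s + 1 = Lv k σ t H₀ v s := by
          have := hlip v u₀ hadj.symm; omega
        have h := hstay v hv ⟨u₀, hadj, hL⟩
        exact Or.inl ⟨h, cnt_succ_not (hne h)⟩
    · have h := (hstep v).1 hv
      exact Or.inl ⟨h, cnt_succ_not (hne h)⟩
  refine ⟨⟨?_, ?_⟩, fun v hv hminp => cnt_succ_of hts ⟨_, hlvl v, hfire v hv hminp⟩⟩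
  · intro v
    rcases hdichot v with ⟨h1, h2⟩ | ⟨h1, h2, -⟩
    · have hEq : Lv k σ t H₀ v (s + 1) = Lv k σ t H₀ v s := by simp only [Lv, h2]
      rw [hEq, h1]
      exact hlvl v
    · have hEq : Lv k σ t H₀ v (s + 1) = Lv k σ t H₀ v s + 1 := by
        simp only [Lv, h1]; omega
      rw [hEq]
      exact h2
  · intro u v hadj
    have hu' := hdichot u
    have hv' := hdichot v
    have h1 := hlip u v hadj
    have hEqu : Lv k σ t H₀ u (s + 1) = Lv k σ t H₀ u s ∨
        (Lv k σ t H₀ u (s + 1) = Lv k σ t H₀ u s + 1 ∧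
         Lv k σ t H₀ u s ≤ Lv k σ t H₀ v s) := by
      rcases hu' with ⟨-, h2⟩ | ⟨h2, -, h3⟩
      · left; simp only [Lv, h2]
      · right
        exact ⟨by simp only [Lv, h2]; omega, h3 v hadj.symm⟩
    have hEqv : Lv k σ t H₀ v s ≤ Lv k σ t H₀ v (s + 1) := by
      rcases hv' with ⟨-, h2⟩ | ⟨h2, -, -⟩ <;> simp only [Lv, h2] <;> omega
    omega
end AuxLemmas


/-- in AlgAU, if the graph (of diameter at most `D`) is good at time `t`,
then for every `i ≥ 0`, each node experiences at least `i` type AA transitions (clock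
increments) during the time interval `[t, ϱ^{D+i}(t))`, where `ϱ` is the round operator
of the asynchronous schedule (every node is activated at least once in `[s, ϱ(s))`). -/
theorem stmt_8 {V : Type} [Fintype V] (G : SimpleGraph V) (hconn : G.Connected)
    (D : ℕ) (hdiam : ∀ u v : V, G.dist u v ≤ D)
    (k : ℤ) (hk : k = 3 * D + 2)
    (σ : ℕ → V → Turn) (A : ℕ → Set V)
    (hvalid : ∀ t v, ValidTurn k (σ t v))
    (hstep : ∀ t, Step k G (A t) (σ t) (σ (t + 1)))
    (ϱ : ℕ → ℕ)
    (hϱ : ∀ s : ℕ, s ≤ ϱ s ∧ ∀ v : V, ∃ s', s ≤ s' ∧ s' < ϱ s ∧ v ∈ A s')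
    (t : ℕ) (hgood : ∀ v, NodeGood k G (σ t) v) :
    ∀ (i : ℕ) (v : V),
      i ≤ Set.ncard {s : ℕ | t ≤ s ∧ s < ϱ^[D + i] t ∧
        ∃ ℓ, σ s v = .able ℓ ∧ σ (s + 1) v = .able (forwardOp k ℓ)} := by
  intro i w
  have hD0 : (0 : ℤ) ≤ (D : ℤ) := Int.natCast_nonneg D
  have hk2 : (2 : ℤ) ≤ k := by rw [hk]; linarith
  have hkD : 2 * k = 6 * (D : ℤ) + 4 := by rw [hk]; ring
  -- validity of levels
  have hval : ∀ v, vld k ((σ t v).level) := by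
    intro v
    have hv := hvalid t v
    cases h : σ t v with
    | able ℓ =>
      rw [h] at hv
      exact vld_of_abs hv.1 hv.2
    | faulty ℓ =>
      rw [h] at hv
      exact vld_of_abs (le_trans one_le_two hv.1) hv.2
  have hprot_t : ∀ v, NodeProt k G (σ t) v := fun v => (hgood v).1
  -- all nodes able at time t
  have hAble : ∀ v, ∃ ℓ, σ t v = Turn.able ℓ := by
    intro v
    have hab := (hgood v).2 v (Or.inl rfl)
    cases h : σ t v with
    | able ℓ => exact ⟨ℓ, rfl⟩
    | faulty ℓ => rw [h] at hab; exact absurd hab (by simp [Turn.isAble])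
  -- the offset function δ
  have hdelta : ∀ v : V, ∃ δ : ℤ, |δ| ≤ (D : ℤ) ∧
      (2 * k) ∣ (idx k ((σ t v).level) - idx k ((σ t w).level) - δ) := by
    intro v
    obtain ⟨p, hp⟩ := hconn.exists_walk_length_eq_dist w v
    obtain ⟨δ, h1, h2⟩ := walk_delta k G (σ t) hk2 hval hprot_t p
    exact ⟨δ, le_trans h1 (by exact_mod_cast (hp ▸ hdiam w v)), h2⟩
  choose δ hδ1 hδ2 using hdelta
  -- pairwise bound
  have hpair : ∀ u v : V, |δ u - δ v| ≤ (D : ℤ) := by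
    intro u v
    obtain ⟨p, hp⟩ := hconn.exists_walk_length_eq_dist u v
    obtain ⟨e, h1, h2⟩ := walk_delta k G (σ t) hk2 hval hprot_t p
    have he : |e| ≤ (D : ℤ) := le_trans h1 (by exact_mod_cast (hp ▸ hdiam u v))
    have hdvd : (2 * k) ∣ (δ u - δ v + e) := by
      obtain ⟨a, ha⟩ := hδ2 u; obtain ⟨b, hb⟩ := hδ2 v; obtain ⟨c, hc⟩ := h2
      exact ⟨-a + b - c, by linarith⟩
    have habs : |δ u - δ v + e| < 2 * k := by
      have t1 : |δ u - δ v + e| ≤ |δ u| + |δ v| + |e| :=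
        le_trans (abs_add_le _ _) (by have := abs_sub (δ u) (δ v); linarith)
      have := hδ1 u; have := hδ1 v
      linarith
    have h0 : δ u - δ v + e = 0 := dvd_small (by linarith) hdvd habs
    calc |δ u - δ v| = |-e| := by rw [show δ u - δ v = -e by linarith]
      _ = |e| := abs_neg e
      _ ≤ (D : ℤ) := he
  -- adjacent bound
  have hadjd : ∀ u v : V, G.Adj u v → |δ u - δ v| ≤ 1 := by
    intro u v hadj
    obtain ⟨e, h1, h2⟩ := adj_step k G (σ t) hk2 hval hprot_t hadj
    have hdvd : (2 * k) ∣ (δ u - δ v + e) := by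
      obtain ⟨a, ha⟩ := hδ2 u; obtain ⟨b, hb⟩ := hδ2 v; obtain ⟨c, hc⟩ := h2
      exact ⟨-a + b - c, by linarith⟩
    have habs : |δ u - δ v + e| < 2 * k := by
      have t1 : |δ u - δ v + e| ≤ |δ u| + |δ v| + |e| :=
        le_trans (abs_add_le _ _) (by have := abs_sub (δ u) (δ v); linarith)
      have := hδ1 u; have := hδ1 v
      linarith
    have h0 : δ u - δ v + e = 0 := dvd_small (by linarith) hdvd habs
    calc |δ u - δ v| = |-e| := by rw [show δ u - δ v = -e by linarith]
      _ = |e| := abs_neg e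
      _ ≤ 1 := h1
  -- the minimizer
  obtain ⟨v0, -, hminv⟩ :=
    Finset.exists_min_image (Finset.univ : Finset V) δ ⟨w, Finset.mem_univ w⟩
  have hminle : ∀ v, δ v0 ≤ δ v := fun v => hminv v (Finset.mem_univ v)
  set ℓ0 : ℤ := (σ t v0).level with hℓ0
  have hℓ0v : vld k ℓ0 := hval v0
  set H₀ : V → ℕ := fun v => (δ v - δ v0).toNat with hH₀def
  have hH₀ : ∀ v, (H₀ v : ℤ) = δ v - δ v0 :=
    fun v => Int.toNat_of_nonneg (by linarith [hminle v])
  have hH₀D : ∀ v, H₀ v ≤ D := by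
    intro v
    have h1 := abs_le.1 (hpair v v0)
    have h2 := hH₀ v
    have : (H₀ v : ℤ) ≤ (D : ℤ) := by linarith
    exact_mod_cast this
  have hH₀adj : ∀ u v, G.Adj u v → H₀ u ≤ H₀ v + 1 := by
    intro u v hadj
    have h1 := abs_le.1 (hadjd u v hadj)
    have h2 := hH₀ u; have h3 := hH₀ v
    have : (H₀ u : ℤ) ≤ (H₀ v : ℤ) + 1 := by linarith
    exact_mod_cast this
  -- initial levels
  have hinit : ∀ v, σ t v = Turn.able ((forwardOp k)^[H₀ v] ℓ0) := by
    intro v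
    obtain ⟨ℓ, hsv⟩ := hAble v
    rw [hsv]
    have hvldv : vld k ℓ := by have := hval v; rwa [hsv] at this
    refine congrArg Turn.able (eq_of_idx_mod hk2 hvldv (vld_iter hk2 hℓ0v _) ?_)
    obtain ⟨a, ha⟩ := idx_iter hk2 hℓ0v (H₀ v)
    obtain ⟨b, hb⟩ := hδ2 v
    obtain ⟨c, hc⟩ := hδ2 v0
    have hH := hH₀ v
    rw [hsv] at hb
    simp only [show (Turn.able ℓ).level = ℓ from rfl] at hb
    rw [← hℓ0] at hc
    exact ⟨b - c - a, by linarith⟩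
  -- invariant at time t and onwards
  have hInvt : InvAU k G σ t H₀ ℓ0 t := by
    constructor
    · intro v
      rw [hinit v]
      simp [Lv, cnt_t]
    · intro u v hadj
      simp only [Lv, cnt_t]
      have := hH₀adj u v hadj
      omega
  have hInvAll : ∀ n, InvAU k G σ t H₀ ℓ0 (t + n) := by
    intro n
    induction n with
    | zero => exact hInvt
    | succ n ih =>
      exact (inv_step hk2 (hstep (t + n)) (Nat.le_add_right t n) ih).1
  have hInv' : ∀ s, t ≤ s → InvAU k G σ t H₀ ℓ0 s := by
    intro s hs
    have := hInvAll (s - t)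
    rwa [Nat.add_sub_cancel' hs] at this
  have hLmono : ∀ (v : V) {s s' : ℕ}, s ≤ s' → Lv k σ t H₀ v s ≤ Lv k σ t H₀ v s' :=
    fun v _ _ h => Nat.add_le_add_left (cnt_mono _ _ _ _ h) _
  -- round progress
  have hround : ∀ j : ℕ, t ≤ ϱ^[j] t ∧ ∀ u : V, j ≤ Lv k σ t H₀ u (ϱ^[j] t) := by
    intro j
    induction j with
    | zero => exact ⟨le_refl t, fun u => Nat.zero_le _⟩
    | succ j ih =>
      obtain ⟨hts, hIH⟩ := ih
      rw [Function.iterate_succ_apply']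
      have h1 : ϱ^[j] t ≤ ϱ (ϱ^[j] t) := (hϱ _).1
      refine ⟨le_trans hts h1, fun u => ?_⟩
      obtain ⟨s', hs1, hs2, hA⟩ := (hϱ (ϱ^[j] t)).2 u
      have hts' : t ≤ s' := le_trans hts hs1
      have hmono1 : ∀ x : V, j ≤ Lv k σ t H₀ x s' := fun x => le_trans (hIH x) (hLmono x hs1)
      by_cases hc : j + 1 ≤ Lv k σ t H₀ u s'
      · exact le_trans hc (hLmono u (le_of_lt hs2))
      · have hEq : Lv k σ t H₀ u s' = j := by have := hmono1 u; omega
        have hminp : ∀ x, G.Adj x u → Lv k σ t H₀ u s' ≤ Lv k σ t H₀ x s' := by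
          intro x _
          rw [hEq]
          exact hmono1 x
        have hfire := (inv_step hk2 (hstep s') hts' (hInv' s' hts')).2 u hA hminp
        have hstep1 : Lv k σ t H₀ u (s' + 1) = j + 1 := by
          simp only [Lv] at hEq ⊢
          rw [hfire]
          omega
        calc j + 1 = Lv k σ t H₀ u (s' + 1) := hstep1.symm
          _ ≤ _ := hLmono u (by omega)
  -- conclusion
  have hfin := (hround (D + i)).2 w
  have hcnt : i ≤ cnt k σ t w (ϱ^[D + i] t) := by
    have h1 := hH₀D w
    simp only [Lv] at hfin
    omega
  rw [cnt_eq_ncard]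
  exact hcnt
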